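/- arXiv:2011.01732 — 2 statements merged into one kernel-verified Lean document; each statement's English description precedes it below -/
import Mathlib

section
/- Let N and M be metric spaces, α: N → M a uniform embedding, T_M a total order on M, and T_N a pullback of T_M along α. If for some k ≥ 1 the ordered space (N,T_N) admits a sequence of snakes of bounded width on k+1 points, then (M,T_M) also admits such a sequence of snakes, and OR_{M,T_M}(k) = k. -/
open scoped Classical

/-- Length of the path visiting the points of a list in order,
for a distance function `d`. -/
noncomputable def pathLen {α : Type*} (d : α → α → ℝ) : List α → ℝ
  | [] => 0
  | [_] => 0
  | a :: b :: l => d a b + pathLen d (b :: l)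

/-- `lopt d X` : minimal length of a path visiting all points of the finite set `X`. -/
noncomputable def lopt {α : Type*} (d : α → α → ℝ) (X : Finset α) : ℝ :=
  sInf {r : ℝ | ∃ l : List α, l.Nodup ∧ l.toFinset = X ∧ pathLen d l = r}

/-- `lord d T X` : length of the path visiting all points of `X` in the order `T`. -/
noncomputable def lord {α : Type*} (d : α → α → ℝ) (T : LinearOrder α) (X : Finset α) : ℝ :=
  sInf {r : ℝ | ∃ l : List α, l.Nodup ∧ l.toFinset = X ∧ List.Pairwise T.lt l ∧ pathLen d l = r}

/-- The order ratio function `OR_{M,T}(k)`. -/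
noncomputable def ORd {α : Type*} (d : α → α → ℝ) (T : LinearOrder α) (k : ℕ) : ℝ :=
  sSup {r : ℝ | ∃ X : Finset α, 2 ≤ X.card ∧ X.card ≤ k + 1 ∧ r = lord d T X / lopt d X}

/-- A snake in an ordered space: a tuple of points strictly increasing with respect to `T`. -/
def IsSnake {α : Type*} (T : LinearOrder α) {n : ℕ} (x : Fin n → α) : Prop :=
  ∀ i j : Fin n, i < j → T.lt (x i) (x j)

/-- Diameter of a snake. -/
noncomputable def snakeDiam {α : Type*} (d : α → α → ℝ) {n : ℕ} (x : Fin n → α) : ℝ :=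
  sSup {r : ℝ | ∃ i j : Fin n, r = d (x i) (x j)}

/-- Width of a snake: maximal distance between points whose indices have the same parity. -/
noncomputable def snakeWidth {α : Type*} (d : α → α → ℝ) {n : ℕ} (x : Fin n → α) : ℝ :=
  sSup {r : ℝ | ∃ i j : Fin n, i.val % 2 = j.val % 2 ∧ r = d (x i) (x j)}

/-- A sequence of snakes on `s` points of uniformly bounded width whose diameters
tend to infinity. -/
def SnakeSeqBddWidth {α : Type*} (d : α → α → ℝ) (T : LinearOrder α) (s : ℕ) : Prop :=
  ∃ (x : ℕ → Fin s → α) (W : ℝ),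
    (∀ n, IsSnake T (x n)) ∧ (∀ n, snakeWidth d (x n) ≤ W) ∧
    Filter.Tendsto (fun n => snakeDiam d (x n)) Filter.atTop Filter.atTop

/-- A uniform (coarse) embedding. -/
def UnifEmb {N : Type*} {M : Type*} [MetricSpace N] [MetricSpace M] (α : N → M) : Prop :=
  ∃ ρ1 ρ2 : ℝ → ℝ, Monotone ρ1 ∧ Monotone ρ2 ∧
    Filter.Tendsto ρ1 Filter.atTop Filter.atTop ∧
    ∀ x y : N, ρ1 (dist x y) ≤ dist (α x) (α y) ∧ dist (α x) (α y) ≤ ρ2 (dist x y)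



section helpers
variable {α : Type*} [MetricSpace α]

lemma pathLen_nonneg : ∀ l : List α, 0 ≤ pathLen dist l
  | [] => le_refl _
  | [_] => le_refl _
  | a :: b :: l => by
      have h := pathLen_nonneg (b :: l)
      have h2 : (0:ℝ) ≤ dist a b := dist_nonneg
      simp only [pathLen]; linarith

lemma pathLen_cons_le (a : α) (l : List α) : pathLen dist l ≤ pathLen dist (a :: l) := by
  cases l with
  | nil => simp [pathLen]
  | cons b t =>
      have h2 : (0:ℝ) ≤ dist a b := dist_nonneg
      simp only [pathLen]; linarith

lemma dist_head_le (a : α) : ∀ (l : List α), ∀ b ∈ l, dist a b ≤ pathLen dist (a :: l)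
  | [] => by simp
  | h :: t => by
      intro b hb
      have hnn := pathLen_nonneg (h :: t)
      rcases List.mem_cons.mp hb with rfl | hb'
      · simp only [pathLen]; linarith
      · have ih := dist_head_le h t b hb'
        have htri := dist_triangle a h b
        simp only [pathLen] at *
        linarith

lemma dist_le_pathLen : ∀ (l : List α), ∀ a ∈ l, ∀ b ∈ l, dist a b ≤ pathLen dist l
  | [] => by simp
  | c :: t => by
      intro a ha b hb
      rcases List.mem_cons.mp ha with rfl | ha'
      · rcases List.mem_cons.mp hb with rfl | hb'
        · simp [pathLen_nonneg]
        · exact dist_head_le a t b hb'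
      · rcases List.mem_cons.mp hb with rfl | hb'
        · rw [dist_comm]; exact dist_head_le b t a ha'
        · exact le_trans (dist_le_pathLen t a ha' b hb') (pathLen_cons_le c t)

lemma pathLen_le_of_bound (c : ℝ) : ∀ l : List α, (∀ a ∈ l, ∀ b ∈ l, dist a b ≤ c) →
    pathLen dist l ≤ ((l.length - 1 : ℕ) : ℝ) * c
  | [] => by simp [pathLen]
  | [a] => by simp [pathLen]
  | a :: b :: t => by
      intro hb
      have ih := pathLen_le_of_bound c (b :: t) (fun x hx y hy =>
        hb x (List.mem_cons_of_mem a hx) y (List.mem_cons_of_mem a hy))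
      have hab : dist a b ≤ c := hb a (by simp) b (by simp)
      simp only [pathLen, List.length_cons, Nat.add_sub_cancel] at *
      push_cast at *
      linarith

lemma pathLen_ofFn {m : ℕ} (f : Fin (m+1) → α) :
    pathLen dist (List.ofFn f) = ∑ i : Fin m, dist (f i.castSucc) (f i.succ) := by
  induction m with
  | zero => simp [List.ofFn_succ, pathLen]
  | succ m ih =>
      have h2 : List.ofFn (fun i : Fin (m+1) => f i.succ)
          = f 1 :: List.ofFn (fun i : Fin m => f i.succ.succ) := by
        simpa using List.ofFn_succ (fun i : Fin (m+1) => f i.succ)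
      rw [List.ofFn_succ, h2]
      show dist (f 0) (f 1) + pathLen dist (f 1 :: _) = _
      rw [← h2, ih (fun i => f i.succ), Fin.sum_univ_succ]
      simp

variable {s : ℕ}

lemma diamSet_finite (y : Fin s → α) :
    {r : ℝ | ∃ i j : Fin s, r = dist (y i) (y j)}.Finite := by
  have : {r : ℝ | ∃ i j : Fin s, r = dist (y i) (y j)}
      = Set.range (fun p : Fin s × Fin s => dist (y p.1) (y p.2)) := by
    ext r; simp [Set.range, eq_comm]
  rw [this]; exact Set.finite_range _

lemma widthSet_finite (y : Fin s → α) :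
    {r : ℝ | ∃ i j : Fin s, i.val % 2 = j.val % 2 ∧ r = dist (y i) (y j)}.Finite :=
  (diamSet_finite y).subset (by rintro r ⟨i, j, _, rfl⟩; exact ⟨i, j, rfl⟩)

lemma dist_le_snakeDiam (y : Fin s → α) (i j : Fin s) :
    dist (y i) (y j) ≤ snakeDiam dist y :=
  le_csSup (diamSet_finite y).bddAbove ⟨i, j, rfl⟩

lemma dist_le_snakeWidth (y : Fin s → α) (i j : Fin s) (h : i.val % 2 = j.val % 2) :
    dist (y i) (y j) ≤ snakeWidth dist y :=
  le_csSup (widthSet_finite y).bddAbove ⟨i, j, h, rfl⟩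

lemma snakeWidth_le [NeZero s] (y : Fin s → α) (c : ℝ)
    (h : ∀ i j : Fin s, i.val % 2 = j.val % 2 → dist (y i) (y j) ≤ c) :
    snakeWidth dist y ≤ c := by
  refine csSup_le ⟨dist (y 0) (y 0), 0, 0, rfl, rfl⟩ ?_
  rintro r ⟨i, j, hp, rfl⟩; exact h i j hp

lemma snakeDiam_attained [NeZero s] (y : Fin s → α) :
    ∃ i j : Fin s, snakeDiam dist y = dist (y i) (y j) := by
  have hmem : snakeDiam dist y ∈ {r : ℝ | ∃ i j : Fin s, r = dist (y i) (y j)} :=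
    Set.Nonempty.csSup_mem ⟨dist (y 0) (y 0), 0, 0, rfl⟩ (diamSet_finite y)
  exact hmem

lemma snake_opp_pair [NeZero s] (y : Fin s → α) {Wc D : ℝ}
    (hW : ∀ i j : Fin s, i.val % 2 = j.val % 2 → dist (y i) (y j) ≤ Wc)
    (hD : D ≤ snakeDiam dist y) (hWD : Wc < D) :
    ∀ i j : Fin s, i.val % 2 ≠ j.val % 2 → D - 2 * Wc ≤ dist (y i) (y j) := by
  obtain ⟨i0, j0, hij⟩ := snakeDiam_attained y
  have hd0 : D ≤ dist (y i0) (y j0) := hij ▸ hD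
  have hp0 : i0.val % 2 ≠ j0.val % 2 := by
    intro hc; exact absurd (hW i0 j0 hc) (by linarith)
  intro i j hp
  have hcases : (i.val % 2 = i0.val % 2 ∧ j.val % 2 = j0.val % 2) ∨
      (i.val % 2 = j0.val % 2 ∧ j.val % 2 = i0.val % 2) := by omega
  rcases hcases with ⟨h1, h2⟩ | ⟨h1, h2⟩
  · have t := dist_triangle4 (y i0) (y i) (y j) (y j0)
    have a1 : dist (y i0) (y i) ≤ Wc := hW i0 i (by omega)
    have a2 : dist (y j) (y j0) ≤ Wc := hW j j0 (by omega)
    linarith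
  · have t := dist_triangle4 (y i0) (y j) (y i) (y j0)
    have a1 : dist (y i0) (y j) ≤ Wc := hW i0 j (by omega)
    have a2 : dist (y i) (y j0) ≤ Wc := hW i j0 (by omega)
    have := dist_comm (y i) (y j)
    linarith

end helpers

lemma toFinset_congr {α : Type*} {D1 D2 : DecidableEq α} (l : List α) :
    @List.toFinset α D1 l = @List.toFinset α D2 l := by
  have : D1 = D2 := Subsingleton.elim _ _
  rw [this]

section lemmas
variable {α : Type*} [MetricSpace α]

lemma lord_eq (T : LinearOrder α) (l : List α) (hnd : l.Nodup) (hsort : List.Pairwise T.lt l) :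
    lord dist T l.toFinset = pathLen dist l := by
  letI := T
  have hset : {r : ℝ | ∃ l' : List α, l'.Nodup ∧ l'.toFinset = l.toFinset ∧
      List.Pairwise T.lt l' ∧ pathLen dist l' = r} = {pathLen dist l} := by
    ext r; constructor
    · rintro ⟨l', h1, h2, h3, rfl⟩
      haveI : Std.Antisymm T.lt := ⟨fun a b h h' => (lt_asymm h h').elim⟩
      have hperm : l'.Perm l := List.perm_of_nodup_nodup_toFinset_eq h1 hnd h2
      have : l' = l := List.Perm.eq_of_pairwise' h3 hsort hperm
      simp [this]
    · rintro rfl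
      exact ⟨l, hnd, rfl, hsort, rfl⟩
  unfold lord
  rw [hset, csInf_singleton]

lemma lopt_le {D : DecidableEq α} (X : Finset α) (l : List α) (hnd : l.Nodup)
    (hfs : @List.toFinset α D l = X) :
    lopt dist X ≤ pathLen dist l :=
  csInf_le ⟨0, by rintro r ⟨l', _, _, rfl⟩; exact pathLen_nonneg l'⟩
    ⟨l, hnd, (toFinset_congr l).trans hfs, rfl⟩

lemma le_lopt {D : DecidableEq α} (X : Finset α) (c : ℝ)
    (h : ∀ l : List α, l.Nodup → @List.toFinset α D l = X → c ≤ pathLen dist l) :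
    c ≤ lopt dist X := by
  refine le_csInf ⟨pathLen dist X.toList, X.toList, X.nodup_toList,
    (toFinset_congr X.toList).trans (X.toList_toFinset), rfl⟩ ?_
  rintro r ⟨l, h1, h2, rfl⟩
  exact h l h1 ((toFinset_congr l).trans h2)

lemma lopt_pos (X : Finset α) (hX : 2 ≤ X.card) : 0 < lopt dist X := by
  classical
  obtain ⟨a, ha, b, hb, hab⟩ := Finset.one_lt_card.mp hX
  refine lt_of_lt_of_le (dist_pos.mpr hab)
    (le_lopt (D := Classical.decEq α) X _ fun l h1 h2 => ?_)
  exact dist_le_pathLen l a (by rw [← List.mem_toFinset, h2]; exact ha)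
    b (by rw [← List.mem_toFinset, h2]; exact hb)

lemma lord_le_lopt (T : LinearOrder α) (X : Finset α) (hX2 : 2 ≤ X.card)
    (k : ℕ) (hXk : X.card ≤ k + 1) (hk : 1 ≤ k) :
    lord dist T X ≤ (k : ℝ) * lopt dist X := by
  obtain ⟨L, hL1, hL2, hL3⟩ : ∃ L : List α, L.Nodup ∧ L.toFinset = X ∧
      List.Pairwise T.lt L ∧ L.length = X.card := by
    letI := T
    refine ⟨Finset.sort X (· ≤ ·), X.sort_nodup _, ?_, X.sortedLT_sort.pairwise, X.length_sort _⟩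
    ext a; simp
  obtain ⟨hL3, hL4⟩ := hL3
  have hlord : lord dist T X = pathLen dist L := by
    conv_lhs => rw [← hL2]
    exact lord_eq T _ hL1 hL3
  have hkpos : (0:ℝ) < (k : ℝ) := by exact_mod_cast hk
  have key : ∀ l : List α, l.Nodup → l.toFinset = X →
      lord dist T X / (k : ℝ) ≤ pathLen dist l := by
    intro l hnd hfs
    have hbound : ∀ a ∈ L, ∀ b ∈ L, dist a b ≤ pathLen dist l := by
      intro a ha b hb
      refine dist_le_pathLen l a ?_ b ?_
      · rw [← List.mem_toFinset, hfs, ← hL2, List.mem_toFinset]; exact ha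
      · rw [← List.mem_toFinset, hfs, ← hL2, List.mem_toFinset]; exact hb
    have h1 := pathLen_le_of_bound (pathLen dist l) _ hbound
    have hcast : ((L.length - 1 : ℕ) : ℝ) ≤ (k : ℝ) := by
      rw [hL4]; exact_mod_cast Nat.sub_le_of_le_add (by omega)
    have h2 : ((L.length - 1 : ℕ) : ℝ) * pathLen dist l ≤ (k : ℝ) * pathLen dist l :=
      mul_le_mul_of_nonneg_right hcast (pathLen_nonneg l)
    rw [div_le_iff₀ hkpos, hlord, mul_comm]
    exact le_trans h1 h2
  have hfin := le_lopt X _ key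
  rw [div_le_iff₀ hkpos, mul_comm] at hfin
  exact hfin


lemma ORdset_bdd (T : LinearOrder α) (k : ℕ) (hk : 1 ≤ k) :
    ∀ r ∈ {r : ℝ | ∃ X : Finset α, 2 ≤ X.card ∧ X.card ≤ k + 1 ∧
      r = lord dist T X / lopt dist X}, r ≤ (k : ℝ) := by
  rintro r ⟨X, h2, hk', rfl⟩
  rw [div_le_iff₀ (lopt_pos X h2)]
  exact lord_le_lopt T X h2 k hk' hk

lemma ORd_le (T : LinearOrder α) (k : ℕ) (hk : 1 ≤ k) : ORd dist T k ≤ (k : ℝ) :=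
  Real.sSup_le (ORdset_bdd T k hk) (by positivity)

end lemmas

/-- If `α : N → M` is a uniform embedding, `T_N` a pullback of `T_M`, and `(N,T_N)` admits a
sequence of snakes of bounded width on `k+1` points, then so does `(M,T_M)`, and
`OR_{M,T_M}(k) = k`. -/
theorem stmt4 {N : Type*} {M : Type*} [MetricSpace N] [MetricSpace M]
    (α : N → M) (hα : UnifEmb α)
    (TM : LinearOrder M) (TN : LinearOrder N)
    (hpull : ∀ x x' : N, TM.lt (α x) (α x') → TN.lt x x')
    (k : ℕ) (hk : 1 ≤ k)
    (h : SnakeSeqBddWidth (fun x y : N => dist x y) TN (k + 1)) :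
    SnakeSeqBddWidth (fun x y : M => dist x y) TM (k + 1) ∧
      ORd (fun x y : M => dist x y) TM k = (k : ℝ) := by
  classical
  obtain ⟨x, W, hsnN, hwN, hdN⟩ := h
  obtain ⟨ρ1, ρ2, hm1, hm2, hρ1top, hρ⟩ := hα
  have hwN' : ∀ n, snakeWidth dist (x n) ≤ W := hwN
  have hdN' : Filter.Tendsto (fun n => snakeDiam dist (x n)) Filter.atTop Filter.atTop := hdN
  have hW0 : (0:ℝ) ≤ W := by
    have h1 := dist_le_snakeWidth (x 0) 0 0 rfl
    rw [dist_self] at h1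
    linarith [hwN' 0]
  set W' := ρ2 W with hW'def
  have hρ20 : (0:ℝ) ≤ W' := by
    have h00 := (hρ (x 0 0) (x 0 0)).2
    rw [dist_self, dist_self] at h00
    exact le_trans h00 (hm2 hW0)
  have hsel : ∀ n : ℕ, ∃ m : ℕ, ∀ i j : Fin (k+1), i.val % 2 ≠ j.val % 2 →
      (n:ℝ) + 1 + W' ≤ dist (α (x m i)) (α (x m j)) := by
    intro n
    obtain ⟨t, ht⟩ := Filter.eventually_atTop.mp (hρ1top.eventually_ge_atTop ((n:ℝ) + 1 + W'))
    obtain ⟨m, hm⟩ := (hdN'.eventually_ge_atTop (max (t + 2*W) (W+1))).exists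
    refine ⟨m, fun i j hp => ?_⟩
    have hWpairs : ∀ i j : Fin (k+1), i.val % 2 = j.val % 2 → dist (x m i) (x m j) ≤ W :=
      fun i j hij => le_trans (dist_le_snakeWidth (x m) i j hij) (hwN' m)
    have hRW : W < max (t + 2*W) (W+1) := lt_of_lt_of_le (by linarith) (le_max_right _ _)
    have hNlow := snake_opp_pair (x m) hWpairs hm hRW i j hp
    have h1 : t ≤ dist (x m i) (x m j) := by
      have := le_max_left (t + 2*W) (W+1); linarith
    exact le_trans (ht _ h1) (hρ _ _).1
  choose msel hsel' using hsel
  set y : ℕ → Fin (k+1) → M := fun n i => α (x (msel n) i) with hy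
  have hsame : ∀ n, ∀ i j : Fin (k+1), i.val % 2 = j.val % 2 → dist (y n i) (y n j) ≤ W' :=
    fun n i j hij => le_trans (hρ _ _).2
      (hm2 (le_trans (dist_le_snakeWidth _ i j hij) (hwN' _)))
  have hopp : ∀ n : ℕ, ∀ i j : Fin (k+1), i.val % 2 ≠ j.val % 2 →
      (n:ℝ) + 1 + W' ≤ dist (y n i) (y n j) := fun n => hsel' n
  have hle : ∀ n, ∀ i j : Fin (k+1), i < j → TM.le (y n i) (y n j) := by
    intro n i j hij
    by_contra hc
    have h2 : TM.lt (y n j) (y n i) := by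
      letI := TM
      exact lt_of_not_ge hc
    have h3 := hpull _ _ h2
    have h4 := hsnN (msel n) i j hij
    exact absurd h3 (by letI := TN; exact lt_asymm h4)
  have hsnM : ∀ n, IsSnake TM (y n) := by
    intro n
    letI := TM
    have hadj : ∀ i : Fin k, y n i.castSucc < y n i.succ := by
      intro i
      have h1 : TM.le (y n i.castSucc) (y n i.succ) := hle n _ _ (Fin.castSucc_lt_succ (i := i))
      have h2 : y n i.castSucc ≠ y n i.succ := by
        have hd := hopp n i.castSucc i.succ (by
          rw [Fin.coe_castSucc, Fin.val_succ]; omega)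
        intro he; rw [he, dist_self] at hd
        have hn0 : (0:ℝ) ≤ (n:ℝ) := Nat.cast_nonneg n
        linarith
      exact lt_of_le_of_ne h1 h2
    have hsm : StrictMono (y n) := Fin.strictMono_iff_lt_succ.mpr hadj
    exact fun i j hij => hsm hij
  have hyinj : ∀ n, Function.Injective (y n) := by
    intro n
    letI := TM
    exact (Fin.strictMono_iff_lt_succ.mpr (fun i =>
      hsnM n i.castSucc i.succ (Fin.castSucc_lt_succ (i := i)))).injective
  have hwM : ∀ n, snakeWidth dist (y n) ≤ W' := fun n => snakeWidth_le (y n) W' (hsame n)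
  have hdiamlow : ∀ n : ℕ, (n:ℝ) + 1 + W' ≤ snakeDiam dist (y n) := by
    intro n
    have hk1 : 1 < k + 1 := by omega
    refine le_trans (hopp n ⟨0, by omega⟩ ⟨1, hk1⟩ ?_) (dist_le_snakeDiam (y n) _ _)
    show 0 % 2 ≠ 1 % 2
    omega
  have htend : Filter.Tendsto (fun n => snakeDiam dist (y n)) Filter.atTop Filter.atTop := by
    refine Filter.tendsto_atTop_mono (fun n => le_trans ?_ (hdiamlow n))
      tendsto_natCast_atTop_atTop
    linarith [hρ20]
  refine ⟨⟨y, W', hsnM, hwM, htend⟩, ?_⟩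
  show ORd dist TM k = (k:ℝ)
  have hub := ORd_le TM k hk
  have hbdd : BddAbove {r : ℝ | ∃ X : Finset M, 2 ≤ X.card ∧ X.card ≤ k + 1 ∧
      r = lord dist TM X / lopt dist X} := ⟨(k:ℝ), fun r hr => ORdset_bdd TM k hk r hr⟩
  set c : ℝ := (k:ℝ) * ((k:ℝ) + 2) * W' with hc
  have hc0 : 0 ≤ c := by positivity
  have key : ∀ n : ℕ, (k:ℝ) - c / ((n:ℝ)+1) ≤ ORd dist TM k := by
    intro n
    set Dn := snakeDiam dist (y n) with hDn
    have hDlow : (n:ℝ) + 1 + W' ≤ Dn := hdiamlow n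
    have hW'Dn : W' < Dn := by
      have : (0:ℝ) ≤ (n:ℝ) := Nat.cast_nonneg n
      linarith
    have hoppM : ∀ i j : Fin (k+1), i.val % 2 ≠ j.val % 2 →
        Dn - 2*W' ≤ dist (y n i) (y n j) :=
      snake_opp_pair (y n) (hsame n) (le_refl Dn) hW'Dn
    set ln : List M := List.ofFn (y n) with hln
    set X : Finset M := ln.toFinset with hX
    have hnd : ln.Nodup := List.nodup_ofFn.mpr (hyinj n)
    have hsort : List.Pairwise TM.lt ln := by
      show ln.Pairwise TM.lt
      rw [hln, List.pairwise_ofFn]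
      exact fun i j hij => hsnM n i j hij
    have hlen : ln.length = k + 1 := by simp [hln]
    have hcard : X.card = k + 1 := by
      rw [hX, List.toFinset_card_of_nodup hnd, hlen]
    have hlord : lord dist TM X = pathLen dist ln := lord_eq TM ln hnd hsort
    have hsum : pathLen dist ln = ∑ i : Fin k, dist (y n i.castSucc) (y n i.succ) :=
      pathLen_ofFn (y n)
    have hlordlow : (k:ℝ) * (Dn - 2*W') ≤ lord dist TM X := by
      rw [hlord, hsum]
      calc (k:ℝ) * (Dn - 2*W') = ∑ _i : Fin k, (Dn - 2*W') := by
            rw [Finset.sum_const, Finset.card_univ, Fintype.card_fin, nsmul_eq_mul]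
        _ ≤ _ := Finset.sum_le_sum (fun i _ => hoppM i.castSucc i.succ (by
            rw [Fin.coe_castSucc, Fin.val_succ]; omega))
    set σ : Fin (k+1) → Fin (k+1) := fun i =>
      ⟨if i.val < k/2 + 1 then 2*i.val else 2*(i.val - (k/2+1)) + 1,
        by have := i.isLt; split_ifs <;> omega⟩ with hσ
    have hσval : ∀ i : Fin (k+1), (σ i).val =
        if i.val < k/2+1 then 2*i.val else 2*(i.val - (k/2+1)) + 1 := by
      intro i; rw [hσ]
    have hσinj : Function.Injective σ := by
      intro a b hab
      have h2 := congrArg Fin.val hab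
      rw [hσval, hσval] at h2
      have ha := a.isLt
      have hb := b.isLt
      apply Fin.ext
      split_ifs at h2 <;> omega
    have hσsurj : Function.Surjective σ := Finite.surjective_of_injective hσinj
    set l2 : List M := List.ofFn (fun i => y n (σ i)) with hl2
    have hnd2 : l2.Nodup := List.nodup_ofFn.mpr ((hyinj n).comp hσinj)
    have hfs2 : l2.toFinset = X := by
      ext a
      simp only [hl2, hX, hln, List.mem_toFinset, List.mem_ofFn, Set.mem_range]
      constructor
      · rintro ⟨i, rfl⟩; exact ⟨σ i, rfl⟩
      · rintro ⟨i, rfl⟩; obtain ⟨j, hj⟩ := hσsurj i; exact ⟨j, by rw [hj]⟩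
    have hE : k/2 < k := by omega
    have hterm : ∀ i : Fin k, dist (y n (σ i.castSucc)) (y n (σ i.succ)) ≤
        (if i = (⟨k/2, hE⟩ : Fin k) then Dn else W') := by
      intro i
      by_cases hi : i = ⟨k/2, hE⟩
      · rw [if_pos hi]; exact dist_le_snakeDiam (y n) _ _
      · rw [if_neg hi]
        apply hsame n
        have hiv : i.val ≠ k/2 := fun hcon => hi (Fin.ext hcon)
        rw [hσval, hσval, Fin.coe_castSucc, Fin.val_succ]
        have hilt := i.isLt
        split_ifs <;> omega
    have hpl2 : pathLen dist l2 = ∑ i : Fin k, dist (y n (σ i.castSucc)) (y n (σ i.succ)) :=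
      pathLen_ofFn _
    have hroutesum : ∑ i : Fin k, dist (y n (σ i.castSucc)) (y n (σ i.succ))
        ≤ Dn + (k:ℝ)*W' := by
      calc ∑ i : Fin k, dist (y n (σ i.castSucc)) (y n (σ i.succ))
          ≤ ∑ i : Fin k, (if i = (⟨k/2, hE⟩ : Fin k) then Dn else W') :=
            Finset.sum_le_sum (fun i _ => hterm i)
        _ = ∑ i : Fin k, (W' + if i = (⟨k/2, hE⟩ : Fin k) then Dn - W' else 0) := by
            apply Finset.sum_congr rfl; intro i _; split_ifs <;> ring
        _ = (k:ℝ)*W' + (Dn - W') := by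
            rw [Finset.sum_add_distrib, Finset.sum_const, Finset.card_univ, Fintype.card_fin,
              nsmul_eq_mul, Finset.sum_ite_eq' Finset.univ (⟨k/2, hE⟩ : Fin k)
                (fun _ => Dn - W'), if_pos (Finset.mem_univ _)]
        _ ≤ Dn + (k:ℝ)*W' := by linarith
    have hloptup : lopt dist X ≤ Dn + (k:ℝ)*W' :=
      le_trans (lopt_le X l2 hnd2 hfs2) (le_trans (le_of_eq hpl2) hroutesum)
    have hloptlow : (n:ℝ) + 1 ≤ lopt dist X := by
      have hk1 : 1 < k + 1 := by omega
      refine le_lopt (D := inferInstance) X ((n:ℝ)+1) (fun l hnl hfl => ?_)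
      have hmem : ∀ i : Fin (k+1), y n i ∈ l := by
        intro i
        rw [← List.mem_toFinset, hfl, hX, hln, List.mem_toFinset]
        rw [List.mem_ofFn]
        exact ⟨i, rfl⟩
      have hd := dist_le_pathLen l (y n ⟨0, by omega⟩) (hmem _) (y n ⟨1, hk1⟩) (hmem _)
      have hge := hopp n ⟨0, by omega⟩ ⟨1, hk1⟩ (by show 0 % 2 ≠ 1 % 2; omega)
      linarith
    have hloptpos : 0 < lopt dist X := lt_of_lt_of_le (by positivity) hloptlow
    have hOR : lord dist TM X / lopt dist X ≤ ORd dist TM k :=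
      le_csSup hbdd ⟨X, by omega, by omega, rfl⟩
    have hkR : (0:ℝ) ≤ (k:ℝ) := Nat.cast_nonneg k
    have hL0 : (k:ℝ) * lopt dist X - c ≤ lord dist TM X := by
      nlinarith [mul_le_mul_of_nonneg_left hloptup hkR]
    have hratio : (k:ℝ) - c/((n:ℝ)+1) ≤ lord dist TM X / lopt dist X := by
      rw [le_div_iff₀ hloptpos]
      have hn1 : (0:ℝ) < (n:ℝ)+1 := by positivity
      have e1 : c/((n:ℝ)+1) * ((n:ℝ)+1) = c := div_mul_cancel₀ c (ne_of_gt hn1)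
      have e2 : c/((n:ℝ)+1) * ((n:ℝ)+1) ≤ c/((n:ℝ)+1) * lopt dist X :=
        mul_le_mul_of_nonneg_left hloptlow (div_nonneg hc0 (le_of_lt hn1))
      nlinarith [e1, e2]
    linarith
  refine le_antisymm hub ?_
  by_contra hlt
  rw [not_le] at hlt
  obtain ⟨n, hn⟩ := exists_nat_gt (c / ((k:ℝ) - ORd dist TM k))
  have hpos : 0 < (k:ℝ) - ORd dist TM k := by linarith
  rw [div_lt_iff₀ hpos] at hn
  have h4 : c/((n:ℝ)+1) < (k:ℝ) - ORd dist TM k := by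
    rw [div_lt_iff₀ (by positivity : (0:ℝ) < (n:ℝ)+1)]
    nlinarith [hpos]
  linarith [key n]
end

section
/- Let M be a tripod (three segments glued at a common endpoint, with the inner path metric) and let l be the minimal length of its three segments. Then OR_M(2) = 2; moreover, for any total order T on M and every ε > 0 there exists a snake on three points in (M,T) of diameter at least l − ε and of width at most 2ε. -/
open scoped Classical

/-- The order ratio function of the (unordered) space: infimum over all total orders. -/
noncomputable def ORsp {α : Type*} (d : α → α → ℝ) (k : ℕ) : ℝ :=
  ⨅ T : LinearOrder α, ORd d T k

lemma pathLen_nonneg_s9 {M : Type*} [MetricSpace M] (l : List M) :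
    0 ≤ pathLen (fun x y : M => dist x y) l := by
  induction l with
  | nil => simp [pathLen]
  | cons a t ih =>
    cases t with
    | nil => simp [pathLen]
    | cons b r =>
      rw [pathLen]
      exact add_nonneg dist_nonneg ih

lemma lopt_le_s9 {M : Type*} [MetricSpace M] (X : Finset M) (lst : List M)
    (h1 : lst.Nodup) (h2 : lst.toFinset = X) :
    lopt (fun x y : M => dist x y) X ≤ pathLen (fun x y : M => dist x y) lst :=
  csInf_le ⟨0, by rintro r ⟨l, -, -, rfl⟩; exact pathLen_nonneg_s9 l⟩ ⟨lst, h1, h2, rfl⟩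

lemma toFinset_indep {α : Type*} (i1 i2 : DecidableEq α) (l : List α) :
    @List.toFinset α i1 l = @List.toFinset α i2 l := by
  have : i1 = i2 := by
    funext a b
    exact Subsingleton.elim _ _
  rw [this]

lemma lord_eq_s9 {α : Type*} (d : α → α → ℝ) (T : LinearOrder α) (lst : List α)
    (h1 : lst.Nodup) (hs : List.Pairwise T.lt lst) :
    lord d T lst.toFinset = pathLen d lst := by
  letI := T
  haveI : IsAntisymm α T.lt := ⟨fun _ _ h h' => (lt_asymm h h').elim⟩
  have hset : {r : ℝ | ∃ l : List α, l.Nodup ∧ l.toFinset = lst.toFinset ∧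
      List.Pairwise T.lt l ∧ pathLen d l = r} = {pathLen d lst} := by
    ext r
    constructor
    · rintro ⟨l', hn, ht, hsort, rfl⟩
      have hperm : List.Perm l' lst := List.perm_of_nodup_nodup_toFinset_eq hn h1 ht
      rw [List.Perm.eq_of_pairwise (fun _ _ _ _ h h' => (lt_asymm h h').elim) hsort hs hperm]
      rfl
    · rintro rfl
      exact ⟨lst, h1, rfl, hs, rfl⟩
  unfold lord
  exact (congrArg sInf hset).trans (csInf_singleton _)

lemma lopt_pos_s9 {M : Type*} [MetricSpace M] (X : Finset M) (h : 2 ≤ X.card) :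
    0 < lopt (fun x y : M => dist x y) X := by
  obtain ⟨a, ha, b, hb, hab⟩ := Finset.one_lt_card.mp (show 1 < X.card by omega)
  have hne : X.offDiag.Nonempty := ⟨(a, b), Finset.mem_offDiag.mpr ⟨ha, hb, hab⟩⟩
  have hδpos : 0 < X.offDiag.inf' hne (fun p => dist p.1 p.2) := by
    rw [Finset.lt_inf'_iff]
    intro p hp
    exact dist_pos.mpr (Finset.mem_offDiag.mp hp).2.2
  have hlb : ∀ r ∈ {r : ℝ | ∃ lst : List M, lst.Nodup ∧ lst.toFinset = X ∧
      pathLen (fun x y : M => dist x y) lst = r},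
      X.offDiag.inf' hne (fun p => dist p.1 p.2) ≤ r := by
    rintro r ⟨lst, hnd, htf, rfl⟩
    have hlen : 2 ≤ lst.length := by
      have := List.toFinset_card_of_nodup hnd
      rw [htf] at this
      omega
    obtain ⟨p, q, t, rfl⟩ : ∃ p q t, lst = p :: q :: t := by
      rcases lst with _ | ⟨p, _ | ⟨q, t⟩⟩
      · simp at hlen
      · simp at hlen
      · exact ⟨p, q, t, rfl⟩
    have hpq : p ≠ q := by
      intro h'
      subst h'
      exact (List.nodup_cons.mp hnd).1 List.mem_cons_self
    have hp : p ∈ X := by rw [← htf]; simp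
    have hq : q ∈ X := by rw [← htf]; simp
    have h1 : X.offDiag.inf' hne (fun p => dist p.1 p.2) ≤ dist p q := by
      have := Finset.inf'_le (s := X.offDiag) (fun p : M × M => dist p.1 p.2)
        (b := (p, q)) (Finset.mem_offDiag.mpr ⟨hp, hq, hpq⟩)
      exact this
    have h2 : 0 ≤ pathLen (fun x y : M => dist x y) (q :: t) := pathLen_nonneg_s9 _
    rw [pathLen]
    linarith
  have hne' : {r : ℝ | ∃ lst : List M, lst.Nodup ∧ lst.toFinset = X ∧
      pathLen (fun x y : M => dist x y) lst = r}.Nonempty :=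
    ⟨_, X.toList, X.nodup_toList, Finset.toList_toFinset X, rfl⟩
  calc (0:ℝ) < X.offDiag.inf' hne (fun p => dist p.1 p.2) := hδpos
    _ ≤ lopt (fun x y : M => dist x y) X := le_csInf hne' hlb

lemma list_eq_pair {α : Type*} {l : List α} (h : l.length = 2) : ∃ a b, l = [a, b] := by
  rcases l with _ | ⟨a, _ | ⟨b, _ | ⟨c, t⟩⟩⟩
  · simp at h
  · simp at h
  · exact ⟨a, b, rfl⟩
  · simp only [List.length_cons, List.length_nil] at h; omega

lemma list_eq_triple {α : Type*} {l : List α} (h : l.length = 3) : ∃ a b c, l = [a, b, c] := by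
  rcases l with _ | ⟨a, _ | ⟨b, _ | ⟨c, _ | ⟨d, t⟩⟩⟩⟩
  · simp at h
  · simp at h
  · simp at h
  · exact ⟨a, b, c, rfl⟩
  · simp only [List.length_cons, List.length_nil] at h; omega

lemma tripod_snake {M : Type*} [MetricSpace M] (L : Fin 3 → ℝ) (hL : ∀ i, 0 < L i)
    (γ : Fin 3 → ℝ → M)
    (hsame : ∀ i : Fin 3, ∀ s t : ℝ, s ∈ Set.Icc 0 (L i) → t ∈ Set.Icc 0 (L i) →
      dist (γ i s) (γ i t) = |s - t|)
    (hdiff : ∀ i j : Fin 3, i ≠ j → ∀ s t : ℝ, s ∈ Set.Icc 0 (L i) → t ∈ Set.Icc 0 (L j) →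
      dist (γ i s) (γ j t) = s + t)
    (T : LinearOrder M) (ε : ℝ) (hε : 0 < ε) :
    ∃ x y z : M, T.lt x y ∧ T.lt y z ∧ dist x z ≤ 2 * ε ∧
      min (min (L 0) (L 1)) (L 2) ≤ dist x y ∧ min (min (L 0) (L 1)) (L 2) ≤ dist y z ∧
      dist x y ≤ dist y z + 2 * ε ∧ dist y z ≤ dist x y + 2 * ε := by
  letI := T
  set l := min (min (L 0) (L 1)) (L 2) with hldef
  have hl0 : 0 < l := lt_min (lt_min (hL 0) (hL 1)) (hL 2)
  have hlL : ∀ i : Fin 3, l ≤ L i := by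
    intro i
    fin_cases i
    · exact (min_le_left _ _).trans (min_le_left _ _)
    · exact (min_le_left _ _).trans (min_le_right _ _)
    · exact min_le_right _ _
  have hmem : ∀ (i : Fin 3) (s : ℝ), 0 ≤ s → s ≤ l → s ∈ Set.Icc 0 (L i) :=
    fun i s h1 h2 => ⟨h1, h2.trans (hlL i)⟩
  have hd1 : ∀ (i : Fin 3) (s t : ℝ), 0 ≤ s → s ≤ l → 0 ≤ t → t ≤ l →
      dist (γ i s) (γ i t) = |s - t| :=
    fun i s t a b c d => hsame i s t (hmem i s a b) (hmem i t c d)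
  have hd2 : ∀ (i j : Fin 3), i ≠ j → ∀ (s t : ℝ), 0 ≤ s → s ≤ l → 0 ≤ t → t ≤ l →
      dist (γ i s) (γ j t) = s + t :=
    fun i j hij s t a b c d => hdiff i j hij s t (hmem i s a b) (hmem j t c d)
  have hend : ∀ i j : Fin 3, i ≠ j → γ i l ≠ γ j l := by
    intro i j hij h
    have hdd := hd2 i j hij l l hl0.le le_rfl hl0.le le_rfl
    rw [h, dist_self] at hdd
    linarith
  obtain ⟨i0, i1, i2, h01, h02, h12, hlt1, hlt2⟩ :
      ∃ i0 i1 i2 : Fin 3, i0 ≠ i1 ∧ i0 ≠ i2 ∧ i1 ≠ i2 ∧ γ i0 l < γ i1 l ∧ γ i1 l < γ i2 l := by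
    rcases (hend 0 1 (by decide)).lt_or_gt with h | h <;>
      rcases (hend 0 2 (by decide)).lt_or_gt with h' | h' <;>
      rcases (hend 1 2 (by decide)).lt_or_gt with h'' | h''
    · exact ⟨0, 1, 2, by decide, by decide, by decide, h, h''⟩
    · exact ⟨0, 2, 1, by decide, by decide, by decide, h', h''⟩
    · exact absurd ((h.trans h'').trans h') (lt_irrefl _)
    · exact ⟨2, 0, 1, by decide, by decide, by decide, h', h⟩
    · exact ⟨1, 0, 2, by decide, by decide, by decide, h, h'⟩
    · exact absurd ((h'.trans h'').trans h) (lt_irrefl _)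
    · exact ⟨1, 2, 0, by decide, by decide, by decide, h'', h'⟩
    · exact ⟨2, 1, 0, by decide, by decide, by decide, h'', h⟩
  set φ : ℝ → M := fun s => if s ≤ l then γ i0 (l - s) else γ i2 (s - l) with hφ
  have hφd : ∀ s t : ℝ, 0 ≤ s → s ≤ 2 * l → 0 ≤ t → t ≤ 2 * l →
      dist (φ s) (φ t) = |s - t| := by
    intro s t hs0 hs2 ht0 ht2
    simp only [hφ]
    split_ifs with h1 h2 h2
    · rw [hd1 i0 (l - s) (l - t) (by linarith) (by linarith) (by linarith) (by linarith)]
      rw [show l - s - (l - t) = t - s by ring, abs_sub_comm]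
    · rw [hd2 i0 i2 h02 (l - s) (t - l) (by linarith) (by linarith) (by linarith) (by linarith)]
      rw [abs_sub_comm, abs_of_nonneg (by linarith)]
      ring
    · rw [hd2 i2 i0 (Ne.symm h02) (s - l) (l - t) (by linarith) (by linarith) (by linarith)
        (by linarith)]
      rw [abs_of_nonneg (by linarith)]
      ring
    · rw [hd1 i2 (s - l) (t - l) (by linarith) (by linarith) (by linarith) (by linarith)]
      rw [show s - l - (t - l) = s - t by ring]
  have hφe : ∀ s : ℝ, 0 ≤ s → s ≤ 2 * l →
      dist (φ s) (γ i1 l) = (if s ≤ l then 2 * l - s else s) := by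
    intro s hs0 hs2
    simp only [hφ]
    split_ifs with h1
    · rw [hd2 i0 i1 h01 (l - s) l (by linarith) (by linarith) hl0.le le_rfl]
      ring
    · rw [hd2 i2 i1 (Ne.symm h12) (s - l) l (by linarith) (by linarith) hl0.le le_rfl]
      ring
  have hφe_ge : ∀ s : ℝ, 0 ≤ s → s ≤ 2 * l → l ≤ dist (φ s) (γ i1 l) := by
    intro s hs0 hs2
    rw [hφe s hs0 hs2]
    split_ifs with h1 <;> linarith
  set A := {s : ℝ | 0 ≤ s ∧ s ≤ 2 * l ∧ φ s < γ i1 l} with hA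
  have h0A : (0 : ℝ) ∈ A := by
    refine ⟨le_rfl, by linarith, ?_⟩
    have : φ 0 = γ i0 l := by simp [hφ, hl0.le]
    rw [this]
    exact hlt1
  have hAne : A.Nonempty := ⟨0, h0A⟩
  have hAbdd : BddAbove A := ⟨2 * l, fun s hs => hs.2.1⟩
  set c := sSup A with hc
  have hc0 : 0 ≤ c := le_csSup hAbdd h0A
  have hc2 : c ≤ 2 * l := csSup_le hAne fun s hs => hs.2.1
  obtain ⟨s, hsA, hs⟩ : ∃ s ∈ A, c - ε < s := exists_lt_of_lt_csSup hAne (by linarith)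
  have hsc : s ≤ c := le_csSup hAbdd hsA
  obtain ⟨hs0, hs2, hsφ⟩ := hsA
  set s' := min (c + ε) (2 * l) with hs'def
  have hs'0 : 0 ≤ s' := le_min (by linarith) (by linarith)
  have hs'2 : s' ≤ 2 * l := min_le_right _ _
  have hcs' : c ≤ s' := le_min (by linarith) hc2
  have hs'c : s' ≤ c + ε := min_le_left _ _
  have hss' : s ≤ s' := hsc.trans hcs'
  have hy : γ i1 l < φ s' := by
    rcases le_or_gt (c + ε) (2 * l) with h | h
    · have hseq : s' = c + ε := min_eq_left h
      have hnotA : s' ∉ A := by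
        intro hmm
        have := le_csSup hAbdd hmm
        rw [hseq] at this
        linarith
      have hne' : φ s' ≠ γ i1 l := by
        intro he
        have := hφe_ge s' hs'0 hs'2
        rw [he, dist_self] at this
        linarith
      rcases lt_trichotomy (φ s') (γ i1 l) with hlt | heq | hgt
      · exact absurd ⟨hs'0, hs'2, hlt⟩ hnotA
      · exact absurd heq hne'
      · exact hgt
    · have hseq : s' = 2 * l := min_eq_right h.le
      have hφs' : φ s' = γ i2 l := by
        rw [hseq]
        simp only [hφ]
        rw [if_neg (by intro hh; linarith), show 2 * l - l = l by ring]
      rw [hφs']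
      exact hlt2
  have hdist_xz : dist (φ s) (φ s') ≤ 2 * ε := by
    rw [hφd s s' hs0 hs2 hs'0 hs'2, abs_sub_comm, abs_of_nonneg (by linarith)]
    linarith
  have hfx := hφe s hs0 hs2
  have hfz := hφe s' hs'0 hs'2
  refine ⟨φ s, γ i1 l, φ s', hsφ, hy, hdist_xz, hφe_ge s hs0 hs2, ?_, ?_, ?_⟩
  · rw [dist_comm]
    exact hφe_ge s' hs'0 hs'2
  · rw [dist_comm (γ i1 l), hfx, hfz]
    split_ifs <;> linarith
  · rw [dist_comm (γ i1 l), hfx, hfz]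
    split_ifs <;> linarith


lemma ORd_eq_two {M : Type*} [MetricSpace M] (L : Fin 3 → ℝ) (hL : ∀ i, 0 < L i)
    (γ : Fin 3 → ℝ → M)
    (hsame : ∀ i : Fin 3, ∀ s t : ℝ, s ∈ Set.Icc 0 (L i) → t ∈ Set.Icc 0 (L i) →
      dist (γ i s) (γ i t) = |s - t|)
    (hdiff : ∀ i j : Fin 3, i ≠ j → ∀ s t : ℝ, s ∈ Set.Icc 0 (L i) → t ∈ Set.Icc 0 (L j) →
      dist (γ i s) (γ j t) = s + t)
    (T : LinearOrder M) :
    ORd (fun x y : M => dist x y) T 2 = 2 := by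
  letI := T
  set l := min (min (L 0) (L 1)) (L 2) with hldef
  have hl0 : 0 < l := lt_min (lt_min (hL 0) (hL 1)) (hL 2)
  set S := {r : ℝ | ∃ X : Finset M, 2 ≤ X.card ∧ X.card ≤ 2 + 1 ∧
      r = lord (fun x y : M => dist x y) T X / lopt (fun x y : M => dist x y) X} with hS
  have hub : ∀ r ∈ S, r ≤ 2 := by
    rintro r ⟨X, hX2, hX3, rfl⟩
    have hpos := lopt_pos_s9 X hX2
    rw [div_le_iff₀ hpos]
    -- key: lord ≤ 2 * b for every admissible path length b
    have hkey : ∀ b ∈ {r : ℝ | ∃ lst : List M, lst.Nodup ∧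
        @List.toFinset M (fun a b => Classical.propDecidable (a = b)) lst = X ∧
        pathLen (fun x y : M => dist x y) lst = r},
        lord (fun x y : M => dist x y) T X ≤ 2 * b := by
      rintro b ⟨lst, hnd, htf0, rfl⟩
      have htf : lst.toFinset = X := (toFinset_indep _ _ lst).trans htf0
      have hslnd : (Finset.sort X (· ≤ ·)).Nodup := X.sort_nodup _
      have hsls : List.Pairwise T.lt (Finset.sort X (· ≤ ·)) := X.sortedLT_sort.pairwise
      have hsltf : (Finset.sort X (· ≤ ·)).toFinset = X := X.sort_toFinset _
      have hlord : lord (fun x y : M => dist x y) T X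
          = pathLen (fun x y : M => dist x y) (Finset.sort X (· ≤ ·)) := by
        conv_lhs => rw [← hsltf]
        exact lord_eq_s9 _ T _ hslnd hsls
      have hsllen : (Finset.sort X (· ≤ ·)).length = X.card := Finset.length_sort _
      have hlstlen : lst.length = X.card := by
        have := List.toFinset_card_of_nodup hnd
        rw [htf] at this
        omega
      rcases (show X.card = 2 ∨ X.card = 3 by omega) with hc | hc
      · obtain ⟨p, q, hpq⟩ := list_eq_pair (by rw [hsllen, hc])
        obtain ⟨u, v, huv⟩ := list_eq_pair (by rw [hlstlen, hc])
        have hpqne : p ≠ q := by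
          have := hslnd
          rw [hpq] at this
          simpa using (List.nodup_cons.mp this).1
        have hpX : p = u ∨ p = v := by
          have : p ∈ X := by rw [← hsltf, hpq]; simp
          rw [← htf, huv] at this
          simpa using this
        have hqX : q = u ∨ q = v := by
          have : q ∈ X := by rw [← hsltf, hpq]; simp
          rw [← htf, huv] at this
          simpa using this
        have hd : dist p q = dist u v := by
          rcases hpX with rfl | rfl <;> rcases hqX with rfl | rfl
          · exact absurd rfl hpqne
          · rfl
          · exact dist_comm _ _
          · exact absurd rfl hpqne
        rw [hlord, hpq, huv]
        simp only [pathLen, add_zero]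
        have := dist_nonneg (x := u) (y := v)
        rw [hd]
        linarith
      · obtain ⟨p, q, w2, hpq⟩ := list_eq_triple (by rw [hsllen, hc])
        obtain ⟨u, v, w, huv⟩ := list_eq_triple (by rw [hlstlen, hc])
        have hmemX : ∀ a : M, a ∈ X → (a = u ∨ a = v ∨ a = w) := by
          intro a ha
          rw [← htf, huv] at ha
          simpa using ha
        have hkey2 : ∀ a b : M, a ∈ X → b ∈ X → dist a b ≤ dist u v + dist v w := by
          intro a b ha hb
          have c1 := dist_triangle u v w
          have c2 := dist_triangle w v u
          have e1 := dist_comm u v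
          have e2 := dist_comm v w
          have e3 := dist_comm u w
          have n1 : (0:ℝ) ≤ dist u v := dist_nonneg
          have n2 : (0:ℝ) ≤ dist v w := dist_nonneg
          have n3 : (0:ℝ) ≤ dist u w := dist_nonneg
          rcases hmemX a ha with rfl | rfl | rfl <;> rcases hmemX b hb with rfl | rfl | rfl <;>
            first
              | (simp only [dist_self]; linarith)
              | linarith
        have hpX : p ∈ X := by rw [← hsltf, hpq]; simp
        have hqX : q ∈ X := by rw [← hsltf, hpq]; simp
        have hwX : w2 ∈ X := by rw [← hsltf, hpq]; simp
        have h1 := hkey2 p q hpX hqX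
        have h2 := hkey2 q w2 hqX hwX
        rw [hlord, hpq, huv]
        simp only [pathLen, add_zero]
        linarith
    have hRne : {r : ℝ | ∃ lst : List M, lst.Nodup ∧
        @List.toFinset M (fun a b => Classical.propDecidable (a = b)) lst = X ∧
        pathLen (fun x y : M => dist x y) lst = r}.Nonempty :=
      ⟨_, X.toList, X.nodup_toList,
        (toFinset_indep _ _ X.toList).trans (Finset.toList_toFinset X), rfl⟩
    have h2 : lord (fun x y : M => dist x y) T X / 2 ≤ lopt (fun x y : M => dist x y) X :=
      le_csInf hRne fun b hb => by linarith [hkey b hb]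
    linarith
  have hget : ∀ η : ℝ, 0 < η → ∃ r ∈ S, 2 - η ≤ r := by
    intro η hη
    have hε : 0 < η * l / 8 := by positivity
    obtain ⟨x, y, z, hxy, hyz, hxz, hdx, hdy, hba, hab⟩ :=
      tripod_snake L hL γ hsame hdiff T (η * l / 8) hε
    set ε := η * l / 8 with hεdef
    have hxyne : x ≠ y := ne_of_lt hxy
    have hyzne : y ≠ z := ne_of_lt hyz
    have hxzne : x ≠ z := ne_of_lt (hxy.trans hyz)
    set X : Finset M := {x, y, z} with hX
    have hcard : X.card = 3 := Finset.card_eq_three.mpr ⟨x, y, z, hxyne, hxzne, hyzne, rfl⟩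
    have htf : ([x, y, z] : List M).toFinset = X := by simp [hX]
    have hnd : ([x, y, z] : List M).Nodup := by simp [hxyne, hxzne, hyzne]
    have hsorted : List.Pairwise T.lt [x, y, z] := by
      simp [List.pairwise_cons, hxy, hyz, hxy.trans hyz]
    have hlord : lord (fun x y : M => dist x y) T X = dist x y + dist y z := by
      rw [← htf, lord_eq_s9 _ T _ hnd hsorted]
      simp [pathLen]
    have hpos := lopt_pos_s9 X (by omega)
    have hloptle : lopt (fun x y : M => dist x y) X
        ≤ 2 * ε + min (dist x y) (dist y z) := by
      rcases le_total (dist x y) (dist y z) with h | h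
      · have htf2 : ([z, x, y] : List M).toFinset = X := by
          ext a
          simp [hX]
          tauto
        have hnd2 : ([z, x, y] : List M).Nodup := by
          simp [hxyne, Ne.symm hxzne, Ne.symm hyzne]
        calc lopt (fun x y : M => dist x y) X
            ≤ pathLen (fun x y : M => dist x y) [z, x, y] :=
              lopt_le_s9 X _ hnd2 ((toFinset_indep _ _ _).trans htf2)
          _ = dist z x + dist x y := by simp [pathLen]
          _ ≤ 2 * ε + min (dist x y) (dist y z) := by
              rw [dist_comm z x, min_eq_left h]
              linarith
      · have htf2 : ([y, z, x] : List M).toFinset = X := by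
          ext a
          simp [hX]
          tauto
        have hnd2 : ([y, z, x] : List M).Nodup := by
          simp [hyzne, Ne.symm hxyne, Ne.symm hxzne]
        calc lopt (fun x y : M => dist x y) X
            ≤ pathLen (fun x y : M => dist x y) [y, z, x] :=
              lopt_le_s9 X _ hnd2 ((toFinset_indep _ _ _).trans htf2)
          _ = dist y z + dist z x := by simp [pathLen]
          _ ≤ 2 * ε + min (dist x y) (dist y z) := by
              rw [dist_comm z x, min_eq_right h]
              linarith
    refine ⟨_, ⟨X, by omega, by omega, rfl⟩, ?_⟩
    set m := min (dist x y) (dist y z) with hm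
    have hml : l ≤ m := le_min hdx hdy
    have hsum : 2 * m ≤ dist x y + dist y z := by
      have := min_le_left (dist x y) (dist y z)
      have := min_le_right (dist x y) (dist y z)
      rw [hm]
      linarith [min_le_left (dist x y) (dist y z), min_le_right (dist x y) (dist y z)]
    rcases le_or_gt η 2 with hη2 | hη2
    · rw [le_div_iff₀ hpos]
      have hA : (2 - η) * lopt (fun x y : M => dist x y) X ≤ (2 - η) * (2 * ε + m) :=
        mul_le_mul_of_nonneg_left hloptle (by linarith)
      have hB : (2 - η) * (2 * ε + m) ≤ 2 * m := by
        nlinarith [mul_le_mul_of_nonneg_left hml hη.le, mul_nonneg hη.le hε.le,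
          mul_nonneg hη.le hl0.le]
      rw [hlord]
      linarith
    · have hlordpos : 0 < lord (fun x y : M => dist x y) T X := by
        rw [hlord]
        linarith
      have := div_pos hlordpos hpos
      linarith
  have hbdd : BddAbove S := ⟨2, fun r hr => hub r hr⟩
  have hSup2 : 2 ≤ sSup S := by
    by_contra hcon
    push_neg at hcon
    obtain ⟨r, hrS, hr⟩ := hget ((2 - sSup S) / 2) (by linarith)
    have := le_csSup hbdd hrS
    linarith
  have hSup2' : sSup S ≤ 2 := Real.sSup_le hub (by norm_num)
  show sSup S = 2
  linarith

/-- Let `M` be a tripod: three segments of lengths `L 0, L 1, L 2` glued at a common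
endpoint, with the inner path metric (axiomatised by the isometric parametrisations `γ`).
Let `l` be the minimal length of the segments.  Then `OR_M(2) = 2`; moreover for any order
`T` and any `ε > 0` there is a snake on three points of diameter at least `l - ε` and of
width at most `2ε`. -/
theorem stmt9 {M : Type*} [MetricSpace M] (L : Fin 3 → ℝ) (hL : ∀ i, 0 < L i)
    (γ : Fin 3 → ℝ → M)
    (hsame : ∀ i : Fin 3, ∀ s t : ℝ, s ∈ Set.Icc 0 (L i) → t ∈ Set.Icc 0 (L i) →
      dist (γ i s) (γ i t) = |s - t|)
    (hdiff : ∀ i j : Fin 3, i ≠ j → ∀ s t : ℝ, s ∈ Set.Icc 0 (L i) → t ∈ Set.Icc 0 (L j) →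
      dist (γ i s) (γ j t) = s + t)
    (hsurj : ∀ x : M, ∃ i : Fin 3, ∃ s ∈ Set.Icc 0 (L i), x = γ i s) :
    ORsp (fun x y : M => dist x y) 2 = 2 ∧
    ∀ (T : LinearOrder M) (ε : ℝ), 0 < ε →
      ∃ x : Fin 3 → M, IsSnake T x ∧
        min (min (L 0) (L 1)) (L 2) - ε ≤ snakeDiam (fun x y : M => dist x y) x ∧
        snakeWidth (fun x y : M => dist x y) x ≤ 2 * ε := by
  constructor
  · have key : ∀ T : LinearOrder M, ORd (fun x y : M => dist x y) T 2 = 2 :=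
      fun T => ORd_eq_two L hL γ hsame hdiff T
    haveI : Nonempty (LinearOrder M) := ⟨IsWellOrder.linearOrder WellOrderingRel⟩
    unfold ORsp
    simp only [key]
    exact ciInf_const
  · intro T ε hε
    letI := T
    obtain ⟨x, y, z, hxy, hyz, hxz, hdx, hdy, -, -⟩ := tripod_snake L hL γ hsame hdiff T ε hε
    refine ⟨![x, y, z], ?_, ?_, ?_⟩
    · intro i j hij
      fin_cases i <;> fin_cases j <;>
        first
          | exact absurd hij (by decide)
          | simpa using hxy
          | simpa using hyz
          | simpa using hxy.trans hyz
    · have hmem : dist x y ∈ {r : ℝ | ∃ i j : Fin 3,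
          r = (fun x y : M => dist x y) (![x, y, z] i) (![x, y, z] j)} := ⟨0, 1, by simp⟩
      have hfin : {r : ℝ | ∃ i j : Fin 3,
          r = (fun x y : M => dist x y) (![x, y, z] i) (![x, y, z] j)}.Finite := by
        apply Set.Finite.subset (Set.finite_range
          (fun p : Fin 3 × Fin 3 => (fun x y : M => dist x y) (![x, y, z] p.1) (![x, y, z] p.2)))
        rintro r ⟨i, j, rfl⟩
        exact ⟨(i, j), rfl⟩
      have hle : min (min (L 0) (L 1)) (L 2) - ε ≤ dist x y := by linarith
      calc min (min (L 0) (L 1)) (L 2) - ε ≤ dist x y := hle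
        _ ≤ snakeDiam (fun x y : M => dist x y) ![x, y, z] := le_csSup hfin.bddAbove hmem
    · apply Real.sSup_le _ (by linarith)
      rintro r ⟨i, j, hpar, rfl⟩
      fin_cases i <;> fin_cases j <;>
        first
          | exact absurd hpar (by decide)
          | (simp only [Matrix.cons_val_zero, Matrix.cons_val_one, Matrix.head_cons]
             simp
             linarith)
          | simpa using hxz
          | (show dist z x ≤ 2 * ε; rw [dist_comm]; exact hxz)
end
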